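/- Let m be a fast sequence, Ē = (E_i) a sequence of graphs good for m with threshold i*, and ξ : ℕ → {0,1} a function with ξ⁻¹{1} infinite and ξ(i) = 0 for all i < i*; let T_k and R_k be as in the parameter construction. Then for every k ∈ ℕ, every ν ∈ T_k, every s ≤ (m°(k))^{k^k}, and all ρ_0,…,ρ_{s−1} ∈ T_{k+1} such that (ν, ρ_i↾k) ∈ R_k for every i < s, there exists t < m(k) such that (ν⌢⟨t⟩, ρ_i) ∈ R_{k+1} for every i < s. -/

import Mathlib

/-- `mCirc m i = ∏_{j<i} m j` (so `mCirc m 0 = 1`). -/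
def mCirc (m : ℕ → ℕ) (i : ℕ) : ℕ := ∏ j ∈ Finset.range i, m j

/-- A *fast sequence* is `m : ℕ → ℕ` with `m 0 ≥ 2` and
`m i ≥ ((m°(i))^(i^i))^(4·(m°(i))^(i^i))` for all `i`. -/
def FastSeq (m : ℕ → ℕ) : Prop :=
  2 ≤ m 0 ∧ ∀ i, (mCirc m i ^ i ^ i) ^ (4 * mCirc m i ^ i ^ i) ≤ m i

/-- `Ē = (E_i)` is a *good sequence of graphs for `m` with threshold `i*`*. -/
def GoodFor (m : ℕ → ℕ) (E : ∀ i : ℕ, Fin (m i) → Fin (m i) → Prop)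
    (istar : ℕ) : Prop :=
  (∀ i, ∀ s t : Fin (m i), E i s t → E i t s) ∧
  (∀ s t : Fin (m 0), E 0 s t) ∧
  ∀ i, istar ≤ i →
    (∀ u : Finset (Fin (m i)), u.card ≤ mCirc m i ^ i ^ i →
      ∃ s : Fin (m i), ∀ t ∈ u, E i s t) ∧
    (∀ u : Finset (Fin (m i)), m i ≤ u.card * mCirc m i ^ i ^ i →
      ¬ ∃ s : Fin (m i), ∀ t ∈ u, E i s t)

/-- The `k`-th level of the tree: sequences `η` of length `k` with `η j < m j`. -/
def TreeLevel (m : ℕ → ℕ) (k : ℕ) : Type := (j : Fin k) → Fin (m j)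

/-- Restriction `η ↾ k` of a sequence of length `k+1`. -/
def restrict {m : ℕ → ℕ} {k : ℕ} (η : TreeLevel m (k + 1)) : TreeLevel m k :=
  fun j => η j.castSucc

/-- Extension `ν⌢⟨t⟩` of a sequence `ν` of length `k` by a last value `t < m k`. -/
def extendSeq {m : ℕ → ℕ} {k : ℕ} (ν : TreeLevel m k) (t : Fin (m k)) :
    TreeLevel m (k + 1) :=
  Fin.snoc (α := fun j : Fin (k + 1) => Fin (m j)) ν t

/-- The relations `R_k` of the parameter construction:
`R_0` holds of the pair of empty sequences, and `(η₁,η₂) ∈ R_{k+1}` iff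
`(η₁↾k, η₂↾k) ∈ R_k` and, in case `ξ k = 1`, additionally `(η₁ k, η₂ k) ∈ E_k`. -/
def Rrel (m : ℕ → ℕ) (E : ∀ i : ℕ, Fin (m i) → Fin (m i) → Prop)
    (ξ : ℕ → Bool) : ∀ k : ℕ, TreeLevel m k → TreeLevel m k → Prop
  | 0 => fun _ _ => True
  | k + 1 => fun η₁ η₂ =>
      Rrel m E ξ k (restrict η₁) (restrict η₂) ∧
      (ξ k = true → E k (η₁ (Fin.last k)) (η₂ (Fin.last k)))

/-- Small sets of connected successors have a common connected successor:
if `s ≤ (m°(k))^(k^k)`, `ν ∈ T_k`, and `ρ_0,…,ρ_{s−1} ∈ T_{k+1}` with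
`(ν, ρ_i↾k) ∈ R_k` for all `i < s`, then there is `t < m k` with
`(ν⌢⟨t⟩, ρ_i) ∈ R_{k+1}` for all `i < s`. -/
theorem parameter_small_extension (m : ℕ → ℕ) (hm : FastSeq m)
    (E : ∀ i : ℕ, Fin (m i) → Fin (m i) → Prop) (istar : ℕ)
    (hE : GoodFor m E istar) (ξ : ℕ → Bool)
    (hξinf : {i : ℕ | ξ i = true}.Infinite)
    (hξ0 : ∀ i < istar, ξ i = false)
    (k : ℕ) (ν : TreeLevel m k) (s : ℕ) (hs : s ≤ mCirc m k ^ k ^ k)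
    (ρ : Fin s → TreeLevel m (k + 1))
    (hρ : ∀ i : Fin s, Rrel m E ξ k ν (restrict (ρ i))) :
    ∃ t : Fin (m k), ∀ i : Fin s, Rrel m E ξ (k + 1) (extendSeq ν t) (ρ i) := by
  have hmpos : ∀ j, 1 ≤ m j := by
    intro j
    induction j using Nat.strong_induction_on with
    | _ j ih =>
      have hc : 1 ≤ mCirc m j := Finset.one_le_prod' (fun i hi => ih i (Finset.mem_range.mp hi))
      calc 1 ≤ (mCirc m j ^ j ^ j) ^ (4 * mCirc m j ^ j ^ j) :=
              Nat.one_le_pow _ _ (Nat.pow_pos hc)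
        _ ≤ m j := hm.2 j
  have hrest : ∀ t : Fin (m k), restrict (extendSeq ν t) = ν := by
    intro t; funext j; simp [restrict, extendSeq]
    exact Fin.snoc_castSucc (α := fun j : Fin (k + 1) => Fin (m j)) _ _ _
  have hlast : ∀ t : Fin (m k), extendSeq ν t (Fin.last k) = t := by
    intro t; simp [extendSeq]
    exact Fin.snoc_last (α := fun j : Fin (k + 1) => Fin (m j)) _ _
  by_cases hξ : ξ k = true
  · have hk : istar ≤ k := by
      by_contra h
      exact absurd (hξ0 k (lt_of_not_ge h)) (by simp [hξ])
    obtain ⟨h1, h2, h3⟩ := hE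
    obtain ⟨hsmall, -⟩ := h3 k hk
    set u : Finset (Fin (m k)) := Finset.univ.image (fun i : Fin s => ρ i (Fin.last k)) with hu
    have hcard : u.card ≤ mCirc m k ^ k ^ k :=
      le_trans (le_trans Finset.card_image_le (by simp)) hs
    obtain ⟨t, ht⟩ := hsmall u hcard
    refine ⟨t, fun i => ⟨by rw [hrest]; exact hρ i, fun _ => ?_⟩⟩
    rw [hlast]
    exact ht _ (Finset.mem_image_of_mem _ (Finset.mem_univ i))
  · refine ⟨⟨0, hmpos k⟩, fun i => ⟨by rw [hrest]; exact hρ i, fun h => absurd h hξ⟩⟩
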